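/- Let ν ⊆ λ be set partitions of {1,...,n} (as arc sets) with ν ≠ λ. Then Σ_{μ : ν ⊆ μ ⊆ λ} (−1)^{|λ−μ|} q^{−nst(μ−ν, ν) − nst(λ−μ, λ)} = 0, where q is a positive rational (or an indeterminate), nst(A,B) = #{i<j<k<l : (i,l)∈B, (j,k)∈A}. -/

import Mathlib

open scoped Classical
open Finset

noncomputable section

/-- A set partition of `{1,…,n}` encoded as a set of arcs `(i,j)` with `1 ≤ i < j ≤ n`,
no two distinct arcs sharing a left endpoint or a right endpoint. -/
def IsSP (n : ℕ) (lam : Finset (ℕ × ℕ)) : Prop :=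
  (∀ a ∈ lam, 1 ≤ a.1 ∧ a.1 < a.2 ∧ a.2 ≤ n) ∧
  (∀ a ∈ lam, ∀ b ∈ lam, a ≠ b → a.1 ≠ b.1 ∧ a.2 ≠ b.2)

/-- `nstF A B = #{(i,j,k,l) : i<j<k<l, (i,l) ∈ B, (j,k) ∈ A}`. -/
def nstF (A B : Finset (ℕ × ℕ)) : ℕ :=
  ((B ×ˢ A).filter fun p => p.1.1 < p.2.1 ∧ p.2.1 < p.2.2 ∧ p.2.2 < p.1.2).card

/-- `dimF λ = Σ_{(i,l)∈λ} (l-i)`. -/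
def dimF (lam : Finset (ℕ × ℕ)) : ℕ := ∑ a ∈ lam, (a.2 - a.1)

/-- Supercharacter value `χ^λ_μ`. -/
def chiF {K : Type*} [Field K] (q : K) (lam mu : Finset (ℕ × ℕ)) : K :=
  if ∀ i j k : ℕ, i < j → j < k → (i, k) ∈ lam → (i, j) ∉ mu ∧ (j, k) ∉ mu then
    (q - 1) ^ (lam.card - (lam ∩ mu).card) * q ^ (dimF lam - lam.card) *
      (-1 : K) ^ ((lam ∩ mu).card) * (q ^ nstF mu lam)⁻¹
  else 0

/-- `(j,k)` conflicts with `λ`: some arc of `λ` shares an endpoint with it and strictly contains it. -/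
def cfltP (lam : Finset (ℕ × ℕ)) (a : ℕ × ℕ) : Prop :=
  ∃ b ∈ lam, (b.1 = a.1 ∧ a.1 < a.2 ∧ a.2 < b.2) ∨ (b.1 < a.1 ∧ a.1 < a.2 ∧ a.2 = b.2)

/-- Strictly nested pairs: inner arc of `ν` not conflicting with `λ`, nested in an arc of `λ`. -/
def snstF (nu lam : Finset (ℕ × ℕ)) : ℕ :=
  ((lam ×ˢ nu).filter fun p =>
    p.1.1 < p.2.1 ∧ p.2.1 < p.2.2 ∧ p.2.2 < p.1.2 ∧ ¬ cfltP lam p.2).card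

/-- Multiset of arc lengths, sorted decreasingly. -/
def dimv (lam : Finset (ℕ × ℕ)) : List ℕ :=
  ((lam.val.map fun a => a.2 - a.1).sort (· ≤ ·)).reverse

/-- All set partitions of `{1,…,n}` as arc sets. -/
def allSP (n : ℕ) : Finset (Finset (ℕ × ℕ)) :=
  ((Finset.Icc 1 n ×ˢ Finset.Icc 1 n).powerset).filter (IsSP n)


/-- Number of arcs of `B` strictly containing `x`. -/
def cntF (x : ℕ × ℕ) (B : Finset (ℕ × ℕ)) : ℕ :=
  (B.filter fun b => b.1 < x.1 ∧ x.1 < x.2 ∧ x.2 < b.2).card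

lemma nst_eq_sum (A B : Finset (ℕ × ℕ)) : nstF A B = ∑ x ∈ A, cntF x B := by
  unfold nstF cntF
  rw [Finset.card_filter, Finset.sum_product, Finset.sum_comm]
  exact Finset.sum_congr rfl fun x hx => (Finset.card_filter _ _).symm

lemma nst_insert {a : ℕ × ℕ} {A : Finset (ℕ × ℕ)} (B : Finset (ℕ × ℕ)) (h : a ∉ A) :
    nstF (insert a A) B = nstF A B + cntF a B := by
  rw [nst_eq_sum, nst_eq_sum, Finset.sum_insert h, add_comm]

/-- The alternating sum over `ν ⊆ μ ⊆ λ` vanishes when `ν ≠ λ`. -/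
theorem stmt_2 (n : ℕ) (q : ℚ) (hq : 0 < q) (nu lam : Finset (ℕ × ℕ))
    (hlam : IsSP n lam) (hnu : IsSP n nu) (hsub : nu ⊆ lam) (hne : nu ≠ lam) :
    ∑ mu ∈ lam.powerset.filter (fun m => nu ⊆ m),
      (-1 : ℚ) ^ ((lam \ mu).card) *
        (q ^ (nstF (mu \ nu) nu + nstF (lam \ mu) lam))⁻¹ = 0 := by
  have hd : (lam \ nu).Nonempty := by
    rw [Finset.sdiff_nonempty]
    exact fun h => hne (Finset.Subset.antisymm hsub h)
  obtain ⟨a, ha, hmax⟩ := Finset.exists_max_image (lam \ nu) (fun b => b.2 - b.1) hd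
  have haL : a ∈ lam := (Finset.mem_sdiff.1 ha).1
  have haN : a ∉ nu := (Finset.mem_sdiff.1 ha).2
  have hcnt : cntF a lam = cntF a nu := by
    unfold cntF
    congr 1
    apply Finset.Subset.antisymm
    · intro b hb
      rw [Finset.mem_filter] at hb ⊢
      refine ⟨?_, hb.2⟩
      by_contra hbn
      have := hmax b (Finset.mem_sdiff.2 ⟨hb.1, hbn⟩)
      obtain ⟨h1, h2, h3⟩ := hb.2
      try simp only at this
      omega
    · exact Finset.filter_subset_filter _ hsub
  set f : Finset (ℕ × ℕ) → ℚ := fun mu =>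
    (-1 : ℚ) ^ ((lam \ mu).card) *
      (q ^ (nstF (mu \ nu) nu + nstF (lam \ mu) lam))⁻¹ with hf
  have key : ∀ mu : Finset (ℕ × ℕ), mu ⊆ lam → a ∉ mu → f (insert a mu) = - f mu := by
    intro mu hml ham
    have haLM : a ∈ lam \ mu := Finset.mem_sdiff.2 ⟨haL, ham⟩
    have e1 : insert a mu \ nu = insert a (mu \ nu) :=
      Finset.insert_sdiff_of_notMem _ haN
    have e2 : lam \ insert a mu = (lam \ mu).erase a := by
      rw [Finset.sdiff_insert]
    have hanm : a ∉ mu \ nu := fun h => ham (Finset.mem_sdiff.1 h).1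
    have n1 : nstF (insert a mu \ nu) nu = nstF (mu \ nu) nu + cntF a nu := by
      rw [e1, nst_insert _ hanm]
    have n2 : nstF (lam \ mu) lam = nstF (lam \ insert a mu) lam + cntF a lam := by
      rw [e2, ← nst_insert lam (Finset.notMem_erase a _), Finset.insert_erase haLM]
    have hexp : nstF (insert a mu \ nu) nu + nstF (lam \ insert a mu) lam
        = nstF (mu \ nu) nu + nstF (lam \ mu) lam := by
      rw [n1, n2, hcnt]; ring
    have hcard : (lam \ mu).card = (lam \ insert a mu).card + 1 := by
      rw [e2, Finset.card_erase_of_mem haLM]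
      have : 0 < (lam \ mu).card := Finset.card_pos.2 ⟨a, haLM⟩
      omega
    rw [hf]
    simp only
    rw [hexp, hcard, pow_succ]
    ring
  have memlem : ∀ mu ∈ (lam.powerset.filter (fun m => nu ⊆ m)), mu ⊆ lam ∧ nu ⊆ mu := by
    intro mu hmu
    rw [Finset.mem_filter, Finset.mem_powerset] at hmu
    exact hmu
  refine Finset.sum_involution
    (fun mu _ => if a ∈ mu then mu.erase a else insert a mu) ?_ ?_ ?_ ?_
  · intro mu hmu
    obtain ⟨hml, hnm⟩ := memlem mu hmu
    by_cases ham : a ∈ mu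
    · simp only [ham, if_true]
      have h1 : f (insert a (mu.erase a)) = - f (mu.erase a) :=
        key (mu.erase a) ((Finset.erase_subset a mu).trans hml) (Finset.notMem_erase a mu)
      rw [Finset.insert_erase ham] at h1
      show f mu + f (mu.erase a) = 0
      rw [h1]; ring
    · simp only [ham, if_false]
      show f mu + f (insert a mu) = 0
      rw [key mu hml ham]; ring
  · intro mu hmu hfne
    by_cases ham : a ∈ mu
    · simp only [ham, if_true]
      intro h
      apply Finset.notMem_erase a mu
      rw [h]; exact ham
    · simp only [ham, if_false]
      intro h
      apply ham
      rw [← h]; exact Finset.mem_insert_self a mu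
  · intro mu hmu
    obtain ⟨hml, hnm⟩ := memlem mu hmu
    rw [Finset.mem_filter, Finset.mem_powerset]
    by_cases ham : a ∈ mu
    · simp only [ham, if_true]
      refine ⟨(Finset.erase_subset a mu).trans hml, ?_⟩
      intro x hx
      exact Finset.mem_erase.2 ⟨fun h => haN (h ▸ hx), hnm hx⟩
    · simp only [ham, if_false]
      exact ⟨Finset.insert_subset haL hml, hnm.trans (Finset.subset_insert a mu)⟩
  · intro mu hmu
    by_cases ham : a ∈ mu
    · simp only [ham, if_true, Finset.notMem_erase a mu, if_false,
        Finset.insert_erase ham]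
    · simp only [ham, if_false, Finset.mem_insert_self a mu, if_true,
        Finset.erase_insert ham]
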